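/- For all regular trees 𝔸, 𝔹 ∈ 𝔗: (for every k ∈ ℕ, ⌊𝔸⌋k ≤T ⌊𝔹⌋k) if and only if 𝔸 ≤T 𝔹. -/

import Mathlib

set_option maxHeartbeats 1000000

namespace CAPPaper

/- ## μ-types: datatype variables `var true v`, type variables `var false v`,
   type constants `const c` (with `const 0` also playing the role of junk/∘),
   type application `app`, function types `arrow`, unions `union`,
   recursive types `mu`. -/

inductive MuTy : Type
  | var : Bool → ℕ → MuTy
  | const : ℕ → MuTy
  | app : MuTy → MuTy → MuTy
  | arrow : MuTy → MuTy → MuTy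
  | union : MuTy → MuTy → MuTy
  | mu : Bool → ℕ → MuTy → MuTy

namespace MuTy

/-- Naive substitution of `T` for the variable `(b, v)`; binders shadow. -/
def subst (b : Bool) (v : ℕ) (T : MuTy) : MuTy → MuTy
  | var b' v' => if b' = b ∧ v' = v then T else var b' v'
  | const c => const c
  | app A B => app (subst b v T A) (subst b v T B)
  | arrow A B => arrow (subst b v T A) (subst b v T B)
  | union A B => union (subst b v T A) (subst b v T B)
  | mu b' v' A => if b' = b ∧ v' = v then mu b' v' A else mu b' v' (subst b v T A)

/-- The variable `(b, v)` occurs free. -/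
def FreeIn (b : Bool) (v : ℕ) : MuTy → Prop
  | var b' v' => b' = b ∧ v' = v
  | const _ => False
  | app A B => FreeIn b v A ∨ FreeIn b v B
  | arrow A B => FreeIn b v A ∨ FreeIn b v B
  | union A B => FreeIn b v A ∨ FreeIn b v B
  | mu b' v' A => ¬(b' = b ∧ v' = v) ∧ FreeIn b v A

/-- The variable `(b, v)` occurs only under `⊃` or `@`. -/
def Guarded (b : Bool) (v : ℕ) : MuTy → Prop
  | var b' v' => ¬(b' = b ∧ v' = v)
  | const _ => True
  | app _ _ => True
  | arrow _ _ => True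
  | union A B => Guarded b v A ∧ Guarded b v B
  | mu b' v' A => (b' = b ∧ v' = v) ∨ Guarded b v A

/-- Contractive μ-types. -/
def Contr : MuTy → Prop
  | var _ _ => True
  | const _ => True
  | app A B => Contr A ∧ Contr B
  | arrow A B => Contr A ∧ Contr B
  | union A B => Contr A ∧ Contr B
  | mu b v A => Guarded b v A ∧ Contr A

/-- μ-datatypes. -/
inductive IsData : MuTy → Prop
  | var (v : ℕ) : IsData (var true v)
  | const (c : ℕ) : IsData (const c)
  | app {D : MuTy} (A : MuTy) : IsData D → IsData (app D A)
  | union {D D' : MuTy} : IsData D → IsData D' → IsData (union D D')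
  | mu {v : ℕ} {D : MuTy} : IsData D → IsData (mu true v D)

def IsMu : MuTy → Prop
  | mu _ _ _ => True
  | _ => False

def IsUnion : MuTy → Prop
  | union _ _ => True
  | _ => False

def IsAtom : MuTy → Prop
  | var _ _ => True
  | const _ => True
  | _ => False

/-- The non-union components of a maximal union, in left-to-right order. -/
def comps : MuTy → List MuTy
  | union A B => comps A ++ comps B
  | A => [A]

/-- Replace the `i`-th (left-to-right) non-union component of a maximal union. -/
def replaceComp : MuTy → ℕ → MuTy → MuTy
  | union A B, i, N =>
      if i < (comps A).length then union (replaceComp A i N) B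
      else union A (replaceComp B (i - (comps A).length) N)
  | A, i, N => if i = 0 then N else A

end MuTy

/- ## Type equivalence `≈μ` -/

inductive EqMu : MuTy → MuTy → Prop
  | refl (A : MuTy) : EqMu A A
  | symm {A B : MuTy} : EqMu A B → EqMu B A
  | trans {A B C : MuTy} : EqMu A B → EqMu B C → EqMu A C
  | app {D D' A A' : MuTy} : EqMu D D' → EqMu A A' → EqMu (.app D A) (.app D' A')
  | arrow {A A' B B' : MuTy} : EqMu A A' → EqMu B B' → EqMu (.arrow A B) (.arrow A' B')
  | union {A A' B B' : MuTy} : EqMu A A' → EqMu B B' → EqMu (.union A B) (.union A' B')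
  | mu {A B : MuTy} (b : Bool) (v : ℕ) : EqMu A B → EqMu (.mu b v A) (.mu b v B)
  | idem (A : MuTy) : EqMu (.union A A) A
  | comm (A B : MuTy) : EqMu (.union A B) (.union B A)
  | assoc (A B C : MuTy) : EqMu (.union A (.union B C)) (.union (.union A B) C)
  | fold (b : Bool) (v : ℕ) (A : MuTy) : EqMu (.mu b v A) (MuTy.subst b v (.mu b v A) A)
  | contract {A B : MuTy} {b : Bool} {v : ℕ} :
      EqMu A (MuTy.subst b v A B) → MuTy.Contr (.mu b v B) → EqMu A (.mu b v B)

/- ## Subtyping `Σ ⊢ A ≤μ B` -/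

inductive SubMu : Set ((Bool × ℕ) × (Bool × ℕ)) → MuTy → MuTy → Prop
  | refl (SS) (A : MuTy) : SubMu SS A A
  | hyp {SS} {V W : Bool × ℕ} : (V, W) ∈ SS → SubMu SS (.var V.1 V.2) (.var W.1 W.2)
  | eq {A B : MuTy} (SS) : EqMu A B → SubMu SS A B
  | trans {SS} {A B C : MuTy} : SubMu SS A B → SubMu SS B C → SubMu SS A C
  | app {SS} {D D' A A' : MuTy} : SubMu SS D D' → SubMu SS A A' →
      SubMu SS (.app D A) (.app D' A')
  | arrow {SS} {A A' B B' : MuTy} : SubMu SS A A' → SubMu SS B B' →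
      SubMu SS (.arrow A' B) (.arrow A B')
  | unionL {SS} {A B C : MuTy} : SubMu SS A C → SubMu SS B C → SubMu SS (.union A B) C
  | unionR1 {SS} {A B C : MuTy} : SubMu SS A B → SubMu SS A (.union B C)
  | unionR2 {SS} {A B C : MuTy} : SubMu SS A C → SubMu SS A (.union B C)
  | mu {SS} {V W : Bool × ℕ} {A B : MuTy} :
      SubMu (insert (V, W) SS) A B →
      ¬ MuTy.FreeIn W.1 W.2 A → ¬ MuTy.FreeIn V.1 V.2 B →
      SubMu SS (.mu V.1 V.2 A) (.mu W.1 W.2 B)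

/-- `A ≤μ B` (empty set of hypotheses). -/
def Sub (A B : MuTy) : Prop := SubMu ∅ A B

/- ## Coinductive equivalence `≈⃗μ` and subtyping `≤⃗μ` on μ-types,
   given via their generating functions and greatest fixed points. -/

/-- One-step unfolding of the rules for `≈⃗μ`. -/
def EqVecStep (R : MuTy → MuTy → Prop) (A B : MuTy) : Prop :=
  (MuTy.IsAtom A ∧ A = B)
  ∨ (∃ D A' D' B', A = .app D A' ∧ B = .app D' B' ∧ R D D' ∧ R A' B')
  ∨ (∃ A1 A2 B1 B2, A = .arrow A1 A2 ∧ B = .arrow B1 B2 ∧ R A1 B1 ∧ R A2 B2)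
  ∨ (∃ i b v C, (∀ X ∈ A.comps.take i, ¬ X.IsMu) ∧ A.comps[i]? = some (.mu b v C) ∧
      R (A.replaceComp i (MuTy.subst b v (.mu b v C) C)) B)
  ∨ ((∀ X ∈ A.comps, ¬ X.IsMu) ∧
      ∃ j b w C, (∀ Y ∈ B.comps.take j, ¬ Y.IsMu) ∧ B.comps[j]? = some (.mu b w C) ∧
      R A (B.replaceComp j (MuTy.subst b w (.mu b w C) C)))
  ∨ ((A.IsUnion ∨ B.IsUnion) ∧ (∀ X ∈ A.comps, ¬ X.IsMu) ∧ (∀ Y ∈ B.comps, ¬ Y.IsMu) ∧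
      (∀ X ∈ A.comps, ∃ Y ∈ B.comps, R X Y) ∧ (∀ Y ∈ B.comps, ∃ X ∈ A.comps, R X Y))

/-- The generating function `Φ≈⃗μ`. -/
def PhiEqVec (X : Set (MuTy × MuTy)) : Set (MuTy × MuTy) :=
  {p | EqVecStep (fun a b => (a, b) ∈ X) p.1 p.2}

/-- `A ≈⃗μ B`: the greatest fixed point of `Φ≈⃗μ`. -/
def EqVec (A B : MuTy) : Prop :=
  ∃ R : MuTy → MuTy → Prop, (∀ x y, R x y → EqVecStep R x y) ∧ R A B

/-- One-step unfolding of the rules for `≤⃗μ`. -/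
def SubVecStep (R : MuTy → MuTy → Prop) (A B : MuTy) : Prop :=
  (MuTy.IsAtom A ∧ A = B)
  ∨ (∃ D A' D' B', A = .app D A' ∧ B = .app D' B' ∧ R D D' ∧ R A' B')
  ∨ (∃ A1 A2 B1 B2, A = .arrow A1 A2 ∧ B = .arrow B1 B2 ∧ R B1 A1 ∧ R A2 B2)
  ∨ (∃ b v A', A = .mu b v A' ∧ R (MuTy.subst b v A A') B)
  ∨ (¬ A.IsMu ∧ ∃ b w B', B = .mu b w B' ∧ R A (MuTy.subst b w B B'))
  ∨ (A.IsUnion ∧ ¬ B.IsMu ∧ ∀ A' ∈ A.comps, R A' B)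
  ∨ (¬ A.IsUnion ∧ ¬ A.IsMu ∧ B.IsUnion ∧ ∃ B' ∈ B.comps, R A B')

/-- The generating function `Φ≤⃗μ`. -/
def PhiSubVec (X : Set (MuTy × MuTy)) : Set (MuTy × MuTy) :=
  {p | SubVecStep (fun a b => (a, b) ∈ X) p.1 p.2}

/-- `A ≤⃗μ B`: the greatest fixed point of `Φ≤⃗μ`. -/
def SubVec (A B : MuTy) : Prop :=
  ∃ R : MuTy → MuTy → Prop, (∀ x y, R x y → SubVecStep R x y) ∧ R A B

/- ## Possibly infinite trees 𝔗 -/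

inductive Leaf : Type
  | var : Bool → ℕ → Leaf
  | const : ℕ → Leaf
  | circ : Leaf
deriving DecidableEq

inductive TSym : Type
  | leaf : Leaf → TSym
  | app : TSym
  | arrow : TSym
  | union : TSym
deriving DecidableEq

/-- Raw (partial) trees: a labelling of binary positions. -/
abbrev PTree := List Bool → Option TSym

def childT (t : PTree) (i : Bool) : PTree := fun π => t (i :: π)

def subtreeAt (t : PTree) (ρ : List Bool) : PTree := fun π => t (ρ ++ π)

def TSym.IsBinary : TSym → Prop
  | .leaf _ => False
  | _ => True

/-- The set 𝔗 of regular possibly infinite trees with no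
    infinite branch consisting solely of ⊕-nodes. -/
structure ITree where
  label : PTree
  root_isSome : (label []).isSome
  child_iff : ∀ (π : List Bool) (i : Bool),
      (label (π ++ [i])).isSome ↔ ∃ s, label π = some s ∧ s.IsBinary
  regular : {u : PTree | ∃ π : List Bool, (label π).isSome ∧ u = subtreeAt label π}.Finite
  noUnionBranch : ¬ ∃ (π : List Bool) (g : ℕ → Bool),
      ∀ n : ℕ, label (π ++ (List.range n).map g) = some TSym.union

/- ## Truncation ⌊·⌋k -/

def truncAux : List Bool → ℕ → PTree → Option TSym
  | [], 0, _ => some (.leaf .circ)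
  | [], _ + 1, t => t []
  | _ :: _, 0, _ => none
  | i :: π, k + 1, t =>
      match t [] with
      | some .union => truncAux π (k + 1) (childT t i)
      | some .app => truncAux π k (childT t i)
      | some .arrow => truncAux π k (childT t i)
      | _ => none

/-- The truncation of a tree at depth `k`. -/
def trunc (k : ℕ) (t : PTree) : PTree := fun π => truncAux π k t

/- ## The infinite unfolding ⟦·⟧ of a μ-type -/

def muDepth : MuTy → ℕ
  | .mu _ _ A => muDepth A + 1
  | _ => 0

def headUnfold : ℕ → MuTy → MuTy
  | 0, A => A
  | n + 1, .mu b v A => headUnfold n (MuTy.subst b v (.mu b v A) A)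
  | _ + 1, A => A

/-- Unfold the head μ-binders away (total; fully unfolds contractive types). -/
def hnf (A : MuTy) : MuTy := headUnfold (muDepth A) A

def unfoldLabel : List Bool → MuTy → Option TSym
  | [], A =>
      match hnf A with
      | .var b v => some (.leaf (.var b v))
      | .const c => some (.leaf (.const c))
      | .app _ _ => some .app
      | .arrow _ _ => some .arrow
      | .union _ _ => some .union
      | .mu _ _ _ => none
  | i :: π, A =>
      match hnf A with
      | .app B C => unfoldLabel π (if i then C else B)
      | .arrow B C => unfoldLabel π (if i then C else B)
      | .union B C => unfoldLabel π (if i then C else B)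
      | _ => none

/-- `⟦A⟧`, the complete unfolding of a μ-type into a tree. -/
def treeOf (A : MuTy) : PTree := fun π => unfoldLabel π A

/- ## Maximal-union components of a tree -/

/-- `ρ` reaches, through ⊕-nodes only, a non-⊕ node of `t`:
    the components of the maximal union decomposition of `t`. -/
def IsCompPath (t : PTree) (ρ : List Bool) : Prop :=
  (∀ ρ' : List Bool, ρ' <+: ρ → ρ' ≠ ρ → t ρ' = some TSym.union) ∧
  (t ρ).isSome ∧ t ρ ≠ some TSym.union

def compPaths (t : PTree) : Set (List Bool) := {ρ | IsCompPath t ρ}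

/- ## Coinductive equality ≈T and subtyping ≤T on trees -/

def EqTStep (R : PTree → PTree → Prop) (A B : PTree) : Prop :=
  (∃ a, A [] = some (.leaf a) ∧ B [] = some (.leaf a))
  ∨ (A [] = some .app ∧ B [] = some .app ∧
      R (childT A false) (childT B false) ∧ R (childT A true) (childT B true))
  ∨ (A [] = some .arrow ∧ B [] = some .arrow ∧
      R (childT A false) (childT B false) ∧ R (childT A true) (childT B true))
  ∨ ((A [] = some .union ∨ B [] = some .union) ∧
      (∀ ρ ∈ compPaths A, ∃ ρ' ∈ compPaths B, R (subtreeAt A ρ) (subtreeAt B ρ')) ∧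
      (∀ ρ' ∈ compPaths B, ∃ ρ ∈ compPaths A, R (subtreeAt A ρ) (subtreeAt B ρ')))

/-- `≈T`, as the greatest fixed point of its generating function. -/
def EqT (A B : PTree) : Prop :=
  ∃ R : PTree → PTree → Prop, (∀ x y, R x y → EqTStep R x y) ∧ R A B

def SubTStep (R : PTree → PTree → Prop) (A B : PTree) : Prop :=
  (∃ a, A [] = some (.leaf a) ∧ B [] = some (.leaf a))
  ∨ (A [] = some .app ∧ B [] = some .app ∧
      R (childT A false) (childT B false) ∧ R (childT A true) (childT B true))
  ∨ (A [] = some .arrow ∧ B [] = some .arrow ∧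
      R (childT B false) (childT A false) ∧ R (childT A true) (childT B true))
  ∨ (A [] = some .union ∧ B [] ≠ some .union ∧
      ∀ ρ ∈ compPaths A, R (subtreeAt A ρ) B)
  ∨ (A [] ≠ some .union ∧ B [] = some .union ∧
      ∃ ρ' ∈ compPaths B, R A (subtreeAt B ρ'))
  ∨ (A [] = some .union ∧ B [] = some .union ∧
      ∀ ρ ∈ compPaths A, ∃ ρ' ∈ compPaths B, R (subtreeAt A ρ) (subtreeAt B ρ'))

/-- `≤T`, as the greatest fixed point of its generating function. -/
def SubT (A B : PTree) : Prop :=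
  ∃ R : PTree → PTree → Prop, (∀ x y, R x y → SubTStep R x y) ∧ R A B

/- ## Multi-hole μ⊕-contexts -/

inductive MuCtx : Type
  | hole : MuCtx
  | mu : Bool → ℕ → MuCtx → MuCtx
  | union : MuCtx → MuCtx → MuCtx

namespace MuCtx

def holes : MuCtx → ℕ
  | hole => 1
  | mu _ _ C => C.holes
  | union C D => C.holes + D.holes

def fill : MuCtx → List MuTy → MuTy
  | hole, As => As.headD (.const 0)
  | mu b v C, As => .mu b v (C.fill As)
  | union C D, As => .union (C.fill (As.take C.holes)) (D.fill (As.drop C.holes))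

/-- Positions of the holes, in left-to-right order. -/
def holePos : MuCtx → List (List Bool)
  | hole => [[]]
  | mu _ _ C => C.holePos.map (fun π => false :: π)
  | union C D => C.holePos.map (fun π => false :: π) ++ D.holePos.map (fun π => true :: π)

/-- Projection of the hole at position `π` of `𝖠[A⃗]`. -/
def proj : MuCtx → List MuTy → List Bool → Option MuTy
  | hole, As, [] => As.head?
  | mu b v C, As, false :: π =>
      (proj C As π).map (MuTy.subst b v (.mu b v (C.fill As)))
  | union C _D, As, false :: π => proj C (As.take C.holes) π
  | union C D, As, true :: π => proj D (As.drop C.holes) π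
  | _, _, _ => none

/-- Erase all μ-binders. -/
def erase : MuCtx → MuCtx
  | hole => hole
  | mu _ _ C => C.erase
  | union C D => .union C.erase D.erase

/-- ⊕-contexts (no μ-binders). -/
def IsUnionCtx : MuCtx → Prop
  | hole => True
  | mu _ _ _ => False
  | union C D => C.IsUnionCtx ∧ D.IsUnionCtx

/-- Filling a (μ-erased) context with trees. -/
def fillT : MuCtx → List PTree → List Bool → Option TSym
  | hole, ts, π => (ts.headD (fun _ => none)) π
  | mu _ _ C, ts, π => fillT C ts π
  | union _ _, _, [] => some TSym.union
  | union C _D, ts, false :: π => fillT C (ts.take C.holes) π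
  | union C D, ts, true :: π => fillT D (ts.drop C.holes) π

end MuCtx

/- ## n-ary-union trees 𝔗ⁿ -/

inductive NSym : Type
  | leaf : Leaf → NSym
  | app : NSym
  | arrow : NSym
  | union : ℕ → NSym

abbrev PTreeN := List ℕ → Option NSym

def childN (t : PTreeN) (j : ℕ) : PTreeN := fun π => t (j :: π)

def IsUnionRootN (t : PTreeN) : Prop := ∃ n, t [] = some (.union n)

/-- A key realising the left-to-right (lexicographic) order of prefix-free
    sets of positions. -/
def pathKey : List Bool → ℚ
  | [] => 0
  | b :: ρ => (if b then 1 else 0) + pathKey ρ / 2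

/-- `ρ` is the `j`-th (in left-to-right order, starting from 0) component path of `t`. -/
def IsNthComp (t : PTree) (j : ℕ) (ρ : List Bool) : Prop :=
  IsCompPath t ρ ∧ {ρ' | IsCompPath t ρ' ∧ pathKey ρ' < pathKey ρ}.ncard = j

-- The translation ⟨·⟩ : 𝔗 → 𝔗ⁿ flattening maximal unions into n-ary unions.
open Classical in
noncomputable def transLabel : List ℕ → PTree → Option NSym
  | [], t =>
      match t [] with
      | some (.leaf a) => some (.leaf a)
      | some .app => some NSym.app
      | some .arrow => some NSym.arrow
      | some .union => some (.union (compPaths t).ncard)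
      | none => none
  | j :: π, t =>
      match t [] with
      | some .union =>
          if h : ∃ ρ, IsNthComp t j ρ then transLabel π (subtreeAt t h.choose)
          else none
      | some .app => if j < 2 then transLabel π (childT t (j == 1)) else none
      | some .arrow => if j < 2 then transLabel π (childT t (j == 1)) else none
      | _ => none

noncomputable def transN (t : PTree) : PTreeN := fun π => transLabel π t

/- ## Subtyping and equivalence up-to a relation ℛ on 𝔗ⁿ -/

def NSubStep (RR S : PTreeN → PTreeN → Prop) (A B : PTreeN) : Prop :=
  let P := fun x y => S x y ∨ RR x y
  (∃ a, A [] = some (.leaf a) ∧ B [] = some (.leaf a))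
  ∨ (A [] = some .app ∧ B [] = some .app ∧
      P (childN A 0) (childN B 0) ∧ P (childN A 1) (childN B 1))
  ∨ (A [] = some .arrow ∧ B [] = some .arrow ∧
      P (childN B 0) (childN A 0) ∧ P (childN A 1) (childN B 1))
  ∨ (∃ n m, A [] = some (.union n) ∧ B [] = some (.union m) ∧
      (∀ i < n, ¬ IsUnionRootN (childN A i)) ∧ (∀ j < m, ¬ IsUnionRootN (childN B j)) ∧
      ∃ f : ℕ → ℕ, ∀ i < n, f i < m ∧ P (childN A i) (childN B (f i)))
  ∨ (∃ n, A [] = some (.union n) ∧ ¬ IsUnionRootN B ∧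
      (∀ i < n, ¬ IsUnionRootN (childN A i)) ∧ ∀ i < n, P (childN A i) B)
  ∨ (∃ m, B [] = some (.union m) ∧ ¬ IsUnionRootN A ∧
      (∀ j < m, ¬ IsUnionRootN (childN B j)) ∧ ∃ k < m, P A (childN B k))

/-- The subtyping relation up-to `RR` on 𝔗ⁿ. -/
def SubN (RR : PTreeN → PTreeN → Prop) (A B : PTreeN) : Prop :=
  ∃ S : PTreeN → PTreeN → Prop, (∀ x y, S x y → NSubStep RR S x y) ∧ S A B

def NEqStep (RR S : PTreeN → PTreeN → Prop) (A B : PTreeN) : Prop :=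
  let P := fun x y => S x y ∨ RR x y
  (∃ a, A [] = some (.leaf a) ∧ B [] = some (.leaf a))
  ∨ (A [] = some .app ∧ B [] = some .app ∧
      P (childN A 0) (childN B 0) ∧ P (childN A 1) (childN B 1))
  ∨ (A [] = some .arrow ∧ B [] = some .arrow ∧
      P (childN A 0) (childN B 0) ∧ P (childN A 1) (childN B 1))
  ∨ (∃ n m, A [] = some (.union n) ∧ B [] = some (.union m) ∧
      (∀ i < n, ¬ IsUnionRootN (childN A i)) ∧ (∀ j < m, ¬ IsUnionRootN (childN B j)) ∧
      (∃ f : ℕ → ℕ, ∀ i < n, f i < m ∧ P (childN A i) (childN B (f i))) ∧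
      (∃ g : ℕ → ℕ, ∀ j < m, g j < n ∧ P (childN A (g j)) (childN B j)))
  ∨ (∃ n, A [] = some (.union n) ∧ ¬ IsUnionRootN B ∧
      (∀ i < n, ¬ IsUnionRootN (childN A i)) ∧ ∀ i < n, P (childN A i) B)
  ∨ (∃ m, B [] = some (.union m) ∧ ¬ IsUnionRootN A ∧
      (∀ j < m, ¬ IsUnionRootN (childN B j)) ∧ ∀ j < m, P A (childN B j))

/-- The equivalence relation up-to `RR` on 𝔗ⁿ. -/
def EqN (RR : PTreeN → PTreeN → Prop) (A B : PTreeN) : Prop :=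
  ∃ S : PTreeN → PTreeN → Prop, (∀ x y, S x y → NEqStep RR S x y) ∧ S A B

/- ## CAP: patterns, terms, matching, reduction, typing -/

inductive Pat : Type
  | matchv : ℕ → Pat
  | const : ℕ → Pat
  | comp : Pat → Pat → Pat

/-- Matchables of a pattern. -/
def Pat.mv : Pat → Set ℕ
  | .matchv x => {x}
  | .const _ => ∅
  | .comp p q => p.mv ∪ q.mv

/-- Linear patterns. -/
def Pat.Linear : Pat → Prop
  | .matchv _ => True
  | .const _ => True
  | .comp p q => p.Linear ∧ q.Linear ∧ ∀ x ∈ p.mv, x ∉ q.mv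

/-- Typing contexts (for terms and for matchables of patterns). -/
abbrev TyCtx := ℕ → Option MuTy

inductive Tm : Type
  | var : ℕ → Tm
  | const : ℕ → Tm
  | app : Tm → Tm → Tm
  | abs : List (Pat × TyCtx × Tm) → Tm

/-- Data structures. -/
def isDataB : Tm → Bool
  | .const _ => true
  | .app d _ => isDataB d
  | _ => false

/-- Matchable forms: data structures and abstractions. -/
def isMatchableB : Tm → Bool
  | .abs _ => true
  | t => isDataB t

/-- Outcome of matching. -/
inductive MOut : Type
  | subst : (ℕ → Option Tm) → MOut
  | fail : MOut
  | wait : MOut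

/-- Disjoint union of matching outcomes. -/
def MOut.join : MOut → MOut → MOut
  | .fail, _ => .fail
  | _, .fail => .fail
  | .wait, _ => .wait
  | _, .wait => .wait
  | .subst σ₁, .subst σ₂ => .subst (fun x => (σ₁ x).orElse (fun _ => σ₂ x))

/-- The matching operation `p ⋗ u`. -/
def pmatch : Pat → Tm → MOut
  | .matchv x, u => .subst (fun y => if y = x then some u else none)
  | .const c, .const c' => if c = c' then .subst (fun _ => none) else .fail
  | .comp p q, .app u v =>
      if isMatchableB (.app u v) then (pmatch p u).join (pmatch q v) else .wait
  | _, u => if isMatchableB u then .fail else .wait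

-- Applying a substitution to a term.
mutual
  def applySubst (σ : ℕ → Option Tm) : Tm → Tm
    | .var x => (σ x).getD (.var x)
    | .const c => .const c
    | .app t u => .app (applySubst σ t) (applySubst σ u)
    | .abs bs => .abs (applySubstBs σ bs)
  def applySubstBs (σ : ℕ → Option Tm) : List (Pat × TyCtx × Tm) → List (Pat × TyCtx × Tm)
    | [] => []
    | (p, θ, s) :: bs => (p, θ, applySubst σ s) :: applySubstBs σ bs
end

/-- Reduction, the context closure of the β-rule of CAP. -/
inductive Step : Tm → Tm → Prop
  | beta (bs : List (Pat × TyCtx × Tm)) (u : Tm) (j : ℕ) (hj : j < bs.length)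
      (σ : ℕ → Option Tm) :
      (∀ i (hi : i < bs.length), i < j → pmatch (bs.get ⟨i, hi⟩).1 u = .fail) →
      pmatch (bs.get ⟨j, hj⟩).1 u = .subst σ →
      Step (.app (.abs bs) u) (applySubst σ (bs.get ⟨j, hj⟩).2.2)
  | appL {t t' : Tm} (u : Tm) : Step t t' → Step (.app t u) (.app t' u)
  | appR (t : Tm) {u u' : Tm} : Step u u' → Step (.app t u) (.app t u')
  | abs (l r : List (Pat × TyCtx × Tm)) (p : Pat) (θ : TyCtx) {s s' : Tm} :
      Step s s' → Step (.abs (l ++ (p, θ, s) :: r)) (.abs (l ++ (p, θ, s') :: r))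

/-- All patterns occurring in a term are linear. -/
inductive TmWF : Tm → Prop
  | var (x : ℕ) : TmWF (.var x)
  | const (c : ℕ) : TmWF (.const c)
  | app {t u : Tm} : TmWF t → TmWF u → TmWF (.app t u)
  | abs {bs : List (Pat × TyCtx × Tm)} :
      (∀ b ∈ bs, b.1.Linear) → (∀ b ∈ bs, TmWF b.2.2) → TmWF (.abs bs)

-- Values.
mutual
  inductive Neut : Tm → Prop
    | var (x : ℕ) : Neut (.var x)
    | const (c : ℕ) : Neut (.const c)
    | app {t u : Tm} : Neut t → IsValue u → Neut (.app t u)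
  inductive IsValue : Tm → Prop
    | neut {t : Tm} : Neut t → IsValue t
    | abs (bs : List (Pat × TyCtx × Tm)) : IsValue (.abs bs)
end

/- ## Pattern typing and compatibility -/

inductive PatTy : TyCtx → Pat → MuTy → Prop
  | matchv {θ : TyCtx} {x : ℕ} {A : MuTy} : θ x = some A → PatTy θ (.matchv x) A
  | const (θ : TyCtx) (c : ℕ) : PatTy θ (.const c) (.const c)
  | comp {θ : TyCtx} {p q : Pat} {D A : MuTy} :
      PatTy θ p D → MuTy.IsData D → PatTy θ q A → PatTy θ (.comp p q) (.app D A)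

/-- Symbols admitted at a position of a μ-type. -/
inductive PSym : Type
  | var : Bool → ℕ → PSym
  | const : ℕ → PSym
  | arrow : PSym
  | app : PSym

/-- `Admits A π s`: the symbol `s` belongs to `A@π`. -/
inductive Admits : MuTy → List Bool → PSym → Prop
  | var (b : Bool) (v : ℕ) : Admits (.var b v) [] (.var b v)
  | const (c : ℕ) : Admits (.const c) [] (.const c)
  | arrowE (A B : MuTy) : Admits (.arrow A B) [] .arrow
  | appE (A B : MuTy) : Admits (.app A B) [] .app
  | arrow1 {A : MuTy} {π : List Bool} {s : PSym} (B : MuTy) :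
      Admits A π s → Admits (.arrow A B) (false :: π) s
  | arrow2 (A : MuTy) {B : MuTy} {π : List Bool} {s : PSym} :
      Admits B π s → Admits (.arrow A B) (true :: π) s
  | app1 {A : MuTy} {π : List Bool} {s : PSym} (B : MuTy) :
      Admits A π s → Admits (.app A B) (false :: π) s
  | app2 (A : MuTy) {B : MuTy} {π : List Bool} {s : PSym} :
      Admits B π s → Admits (.app A B) (true :: π) s
  | unionL {A : MuTy} {π : List Bool} {s : PSym} (B : MuTy) :
      Admits A π s → Admits (.union A B) π s
  | unionR (A : MuTy) {B : MuTy} {π : List Bool} {s : PSym} :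
      Admits B π s → Admits (.union A B) π s
  | mu {b : Bool} {v : ℕ} {A : MuTy} {π : List Bool} {s : PSym} :
      Admits (MuTy.subst b v (.mu b v A) A) π s → Admits (.mu b v A) π s

/-- Subpattern at a position. -/
def Pat.at? : Pat → List Bool → Option Pat
  | p, [] => some p
  | .comp p q, i :: π => if i then q.at? π else p.at? π
  | _, _ :: _ => none

/-- Applying a (pattern) substitution to a pattern. -/
def psubst (σ : ℕ → Option Pat) : Pat → Pat
  | .matchv x => (σ x).getD (.matchv x)
  | .const c => .const c
  | .comp p q => .comp (psubst σ p) (psubst σ q)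

/-- `p` subsumes `q`. -/
def Subsumes (p q : Pat) : Prop := ∃ σ, psubst σ p = q

def CommonPos (p q : Pat) (π : List Bool) : Prop :=
  (p.at? π).isSome ∧ (q.at? π).isSome

/-- Mismatching positions between two patterns. -/
def CPos (p q : Pat) (π : List Bool) : Prop :=
  CommonPos p q π ∧ (∀ π' : List Bool, π' ≠ [] → ¬ CommonPos p q (π ++ π')) ∧
  ∃ p' q', p.at? π = some p' ∧ q.at? π = some q' ∧ ¬ Subsumes p' q'

/-- Compatibility of `⟨θ ⊳ p : A⟩` with `⟨θ' ⊳ q : B⟩`. -/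
def Compat (p : Pat) (A : MuTy) (q : Pat) (B : MuTy) : Prop :=
  (∀ π, CPos p q π → ∃ s, Admits A π s ∧ Admits B π s) → Sub B A

def ctxDom (θ : TyCtx) : Set ℕ := {x | (θ x).isSome}

def ctxExt (Γ θ : TyCtx) : TyCtx := fun x => (θ x).orElse (fun _ => Γ x)

/-- `⊕` of a nonempty list of types. -/
def bigUnion : List MuTy → MuTy
  | [] => .const 0
  | [A] => A
  | A :: As => .union A (bigUnion As)

/- ## Term typing -/

inductive Ty : TyCtx → Tm → MuTy → Prop
  | var {Γ : TyCtx} {x : ℕ} {A : MuTy} : Γ x = some A → Ty Γ (.var x) A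
  | const (Γ : TyCtx) (c : ℕ) : Ty Γ (.const c) (.const c)
  | comp {Γ : TyCtx} {r u : Tm} {D A : MuTy} :
      Ty Γ r D → MuTy.IsData D → Ty Γ u A → Ty Γ (.app r u) (.app D A)
  | abs {Γ : TyCtx} (l : List ((Pat × TyCtx × Tm) × MuTy)) {B : MuTy} :
      l ≠ [] →
      (∀ i j (hi : i < l.length) (hj : j < l.length), i < j →
        Compat (l.get ⟨i, hi⟩).1.1 (l.get ⟨i, hi⟩).2
               (l.get ⟨j, hj⟩).1.1 (l.get ⟨j, hj⟩).2) →
      (∀ b ∈ l, PatTy b.1.2.1 b.1.1 b.2) →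
      (∀ b ∈ l, ctxDom b.1.2.1 = Pat.mv b.1.1) →
      (∀ b ∈ l, Ty (ctxExt Γ b.1.2.1) b.1.2.2 B) →
      Ty Γ (.abs (l.map Prod.fst)) (.arrow (bigUnion (l.map Prod.snd)) B)
  | app {Γ : TyCtx} {r u : Tm} {B : MuTy} (As : List MuTy) (k : ℕ) (hk : k < As.length) :
      Ty Γ r (.arrow (bigUnion As) B) →
      Ty Γ u (As.get ⟨k, hk⟩) →
      Ty Γ (.app r u) B
  | sub {Γ : TyCtx} {s : Tm} {A A' : MuTy} : Ty Γ s A → Sub A A' → Ty Γ s A'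

/- ## Syntax-directed term typing -/

inductive TySD : TyCtx → Tm → MuTy → Prop
  | var {Γ : TyCtx} {x : ℕ} {A : MuTy} : Γ x = some A → TySD Γ (.var x) A
  | const (Γ : TyCtx) (c : ℕ) : TySD Γ (.const c) (.const c)
  | comp {Γ : TyCtx} {r u : Tm} {D A : MuTy} :
      TySD Γ r D → MuTy.IsData D → TySD Γ u A → TySD Γ (.app r u) (.app D A)
  | abs {Γ : TyCtx} (l : List ((Pat × TyCtx × Tm) × MuTy × MuTy)) :
      l ≠ [] →
      (∀ i j (hi : i < l.length) (hj : j < l.length), i < j →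
        Compat (l.get ⟨i, hi⟩).1.1 (l.get ⟨i, hi⟩).2.1
               (l.get ⟨j, hj⟩).1.1 (l.get ⟨j, hj⟩).2.1) →
      (∀ b ∈ l, PatTy b.1.2.1 b.1.1 b.2.1) →
      (∀ b ∈ l, ctxDom b.1.2.1 = Pat.mv b.1.1) →
      (∀ b ∈ l, TySD (ctxExt Γ b.1.2.1) b.1.2.2 b.2.2) →
      TySD Γ (.abs (l.map Prod.fst))
        (.arrow (bigUnion (l.map (fun b => b.2.1))) (bigUnion (l.map (fun b => b.2.2))))
  | app {Γ : TyCtx} {r u : Tm} {A C : MuTy} (ABs : List (MuTy × MuTy)) :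
      ABs ≠ [] →
      TySD Γ r A →
      EqMu A (bigUnion (ABs.map (fun q => .arrow q.1 q.2))) →
      (∀ q ∈ ABs, ¬ (q.1).IsUnion) →
      TySD Γ u C →
      (∀ q ∈ ABs, Sub C q.1) →
      TySD Γ (.app r u) (bigUnion (ABs.map Prod.snd))

/- ## Auxiliary development for Statement 11 -/

section TruncSubT

lemma subTStep_mono {R S : PTree → PTree → Prop} (hRS : ∀ a b, R a b → S a b)
    {a b : PTree} (h : SubTStep R a b) : SubTStep S a b := by
  rcases h with h | ⟨h1,h2,h3,h4⟩ | ⟨h1,h2,h3,h4⟩ | ⟨h1,h2,h3⟩ | ⟨h1,h2,ρ',hρ',h3⟩ | ⟨h1,h2,h3⟩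
  · exact Or.inl h
  · exact Or.inr <| Or.inl ⟨h1, h2, hRS _ _ h3, hRS _ _ h4⟩
  · exact Or.inr <| Or.inr <| Or.inl ⟨h1, h2, hRS _ _ h3, hRS _ _ h4⟩
  · exact Or.inr <| Or.inr <| Or.inr <| Or.inl ⟨h1, h2, fun ρ hρ => hRS _ _ (h3 ρ hρ)⟩
  · exact Or.inr <| Or.inr <| Or.inr <| Or.inr <| Or.inl ⟨h1, h2, ρ', hρ', hRS _ _ h3⟩
  · exact Or.inr <| Or.inr <| Or.inr <| Or.inr <| Or.inr
      ⟨h1, h2, fun ρ hρ => (h3 ρ hρ).imp fun ρ' hh => ⟨hh.1, hRS _ _ hh.2⟩⟩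

lemma subT_dest {u v : PTree} (h : SubT u v) : SubTStep SubT u v := by
  obtain ⟨R, hR, huv⟩ := h
  exact subTStep_mono (fun a b hab => ⟨R, hR, hab⟩) (hR _ _ huv)

lemma trunc_succ_nil (k : ℕ) (t : PTree) : trunc (k+1) t [] = t [] := rfl

lemma trunc_zero_nil (t : PTree) : trunc 0 t [] = some (.leaf .circ) := rfl

lemma subT_trunc_zero (t u : PTree) : SubT (trunc 0 t) (trunc 0 u) :=
  ⟨fun x y => x [] = some (.leaf .circ) ∧ y [] = some (.leaf .circ),
   fun _ _ h => Or.inl ⟨.circ, h.1, h.2⟩, rfl, rfl⟩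

lemma childT_trunc_app {t : PTree} (h : t [] = some .app) (k : ℕ) (i : Bool) :
    childT (trunc (k+1) t) i = trunc k (childT t i) := by
  funext π
  show truncAux (i :: π) (k+1) t = truncAux π k (childT t i)
  simp [truncAux, h]

lemma childT_trunc_arrow {t : PTree} (h : t [] = some .arrow) (k : ℕ) (i : Bool) :
    childT (trunc (k+1) t) i = trunc k (childT t i) := by
  funext π
  show truncAux (i :: π) (k+1) t = truncAux π k (childT t i)
  simp [truncAux, h]

lemma childT_trunc_union {t : PTree} (h : t [] = some .union) (k : ℕ) (i : Bool) :
    childT (trunc (k+1) t) i = trunc (k+1) (childT t i) := by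
  funext π
  show truncAux (i :: π) (k+1) t = truncAux π (k+1) (childT t i)
  simp [truncAux, h]

lemma subtreeAt_append (t : PTree) (π ρ : List Bool) :
    subtreeAt t (π ++ ρ) = subtreeAt (subtreeAt t π) ρ := by
  funext σ
  simp [subtreeAt, List.append_assoc]

end TruncSubT

section TruncSubT2

lemma trunc_eq_of_prefix_union (k : ℕ) :
    ∀ (ρ : List Bool) (t : PTree),
      (∀ ρ', ρ' <+: ρ → ρ' ≠ ρ → t ρ' = some .union) → trunc (k+1) t ρ = t ρ := by
  intro ρ
  induction ρ with
  | nil => intro t _; exact trunc_succ_nil k t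
  | cons i ρ ih =>
    intro t h
    have ht : t [] = some .union := h [] (List.nil_prefix) (by simp)
    have h1 : trunc (k+1) t (i :: ρ) = trunc (k+1) (childT t i) ρ := by
      rw [← childT_trunc_union ht k i]; rfl
    have h2 := ih (childT t i) (fun ρ' hp hne =>
      h (i :: ρ') (List.cons_prefix_cons.mpr ⟨rfl, hp⟩) (by simpa using hne))
    rw [h1, h2]; rfl

lemma prefix_union_of_trunc (k : ℕ) :
    ∀ (ρ : List Bool) (t : PTree),
      (∀ ρ', ρ' <+: ρ → ρ' ≠ ρ → trunc (k+1) t ρ' = some .union) →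
      ∀ ρ', ρ' <+: ρ → ρ' ≠ ρ → t ρ' = some .union := by
  intro ρ
  induction ρ with
  | nil => intro t _ ρ' hp hne; exact absurd (List.prefix_nil.mp hp) hne
  | cons i ρ ih =>
    intro t h ρ' hp hne
    have ht : t [] = some .union := by
      have := h [] (List.nil_prefix) (by simp)
      rwa [trunc_succ_nil] at this
    rcases ρ' with _ | ⟨j, ρ'⟩
    · exact ht
    · obtain ⟨hji, hp'⟩ := List.cons_prefix_cons.mp hp
      rw [hji] at hne ⊢
      refine ih (childT t i) ?_ ρ' hp' (by simpa using hne)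
      intro σ hσ hσne
      have hh := h (i :: σ) (List.cons_prefix_cons.mpr ⟨rfl, hσ⟩) (by simpa using hσne)
      rw [show trunc (k+1) t (i :: σ) = trunc (k+1) (childT t i) σ from by
        rw [← childT_trunc_union ht k i]; rfl] at hh
      exact hh

lemma subtreeAt_trunc : ∀ (ρ : List Bool) (t : PTree) (k : ℕ),
    (∀ ρ', ρ' <+: ρ → ρ' ≠ ρ → t ρ' = some .union) →
    subtreeAt (trunc (k+1) t) ρ = trunc (k+1) (subtreeAt t ρ) := by
  intro ρ
  induction ρ with
  | nil => intro t k _; rfl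
  | cons i ρ ih =>
    intro t k h
    have ht : t [] = some .union := h [] (List.nil_prefix) (by simp)
    have h0 : subtreeAt (trunc (k+1) t) (i :: ρ) = subtreeAt (childT (trunc (k+1) t) i) ρ := rfl
    rw [h0, childT_trunc_union ht k i,
      ih (childT t i) k (fun ρ' hp hne =>
        h (i :: ρ') (List.cons_prefix_cons.mpr ⟨rfl, hp⟩) (by simpa using hne))]
    rfl

lemma isCompPath_trunc_iff (k : ℕ) (t : PTree) (ρ : List Bool) :
    IsCompPath (trunc (k+1) t) ρ ↔ IsCompPath t ρ := by
  constructor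
  · rintro ⟨h1, h2, h3⟩
    have hp := prefix_union_of_trunc k ρ t h1
    have he := trunc_eq_of_prefix_union k ρ t hp
    exact ⟨hp, he ▸ h2, he ▸ h3⟩
  · rintro ⟨h1, h2, h3⟩
    have he := trunc_eq_of_prefix_union k ρ t h1
    refine ⟨fun ρ' hpre hne => ?_, he ▸ h2, he ▸ h3⟩
    have he' : trunc (k+1) t ρ' = t ρ' := by
      refine trunc_eq_of_prefix_union k ρ' t (fun σ hσ hσne => h1 σ (hσ.trans hpre) ?_)
      intro hEq
      subst hEq
      exact hσne (List.IsPrefix.eq_of_length hpre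
        (Nat.le_antisymm hpre.length_le hσ.length_le)).symm
    rw [he']
    exact h1 ρ' hpre hne
  
end TruncSubT2

section TruncSubT3

lemma truncAux_trunc : ∀ (π : List Bool) (k m : ℕ) (t : PTree),
    truncAux π k (trunc m t) = truncAux π (min k m) t := by
  intro π
  induction π with
  | nil =>
    intro k m t
    match k, m with
    | 0, m => simp [truncAux]
    | k+1, 0 => simp [truncAux, trunc]
    | k+1, m+1 => rw [Nat.succ_min_succ]; rfl
  | cons i π ih =>
    intro k m t
    match k, m with
    | 0, m => simp [truncAux]
    | k+1, 0 => simp [truncAux, trunc]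
    | k+1, m+1 =>
      rw [Nat.succ_min_succ]
      rcases hs : t [] with _ | s
      · show truncAux (i :: π) (k+1) (trunc (m+1) t) = truncAux (i :: π) (min k m + 1) t
        simp [truncAux, trunc_succ_nil, hs]
      · cases s with
        | leaf a => simp [truncAux, trunc_succ_nil, hs]
        | app =>
          have hc := childT_trunc_app hs m i
          have h1 : truncAux (i :: π) (k+1) (trunc (m+1) t)
              = truncAux π k (childT (trunc (m+1) t) i) := by
            simp [truncAux, trunc_succ_nil, hs]
          have h2 : truncAux (i :: π) (min k m + 1) t
              = truncAux π (min k m) (childT t i) := by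
            simp [truncAux, hs]
          rw [h1, h2, hc, ih k m (childT t i)]
        | arrow =>
          have hc := childT_trunc_arrow hs m i
          have h1 : truncAux (i :: π) (k+1) (trunc (m+1) t)
              = truncAux π k (childT (trunc (m+1) t) i) := by
            simp [truncAux, trunc_succ_nil, hs]
          have h2 : truncAux (i :: π) (min k m + 1) t
              = truncAux π (min k m) (childT t i) := by
            simp [truncAux, hs]
          rw [h1, h2, hc, ih k m (childT t i)]
        | union =>
          have hc := childT_trunc_union hs m i
          have h1 : truncAux (i :: π) (k+1) (trunc (m+1) t)
              = truncAux π (k+1) (childT (trunc (m+1) t) i) := by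
            simp [truncAux, trunc_succ_nil, hs]
          have h2 : truncAux (i :: π) (min k m + 1) t
              = truncAux π (min k m + 1) (childT t i) := by
            simp [truncAux, hs]
          have h3 := ih (k+1) (m+1) (childT t i)
          rw [Nat.succ_min_succ] at h3
          rw [h1, h2, hc, h3]

lemma trunc_trunc (k m : ℕ) (t : PTree) : trunc k (trunc m t) = trunc (min k m) t := by
  funext π
  exact truncAux_trunc π k m t

lemma subT_trunc {u v : PTree} (h : SubT u v) (k : ℕ) : SubT (trunc k u) (trunc k v) := by
  refine ⟨fun x y => ∃ k u v, SubT u v ∧ x = trunc k u ∧ y = trunc k v, ?_,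
    k, u, v, h, rfl, rfl⟩
  rintro x y ⟨k, u, v, huv, rfl, rfl⟩
  match k with
  | 0 => exact Or.inl ⟨.circ, rfl, rfl⟩
  | k+1 =>
    rcases subT_dest huv with
      ⟨a,h1,h2⟩ | ⟨h1,h2,h3,h4⟩ | ⟨h1,h2,h3,h4⟩ | ⟨h1,h2,h3⟩ | ⟨h1,h2,ρ',hρ',h3⟩ | ⟨h1,h2,h3⟩
    · exact Or.inl ⟨a, by rw [trunc_succ_nil, h1], by rw [trunc_succ_nil, h2]⟩
    · refine Or.inr <| Or.inl ⟨by rw [trunc_succ_nil, h1], by rw [trunc_succ_nil, h2], ?_, ?_⟩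
      · rw [childT_trunc_app h1, childT_trunc_app h2]
        exact ⟨k, _, _, h3, rfl, rfl⟩
      · rw [childT_trunc_app h1, childT_trunc_app h2]
        exact ⟨k, _, _, h4, rfl, rfl⟩
    · refine Or.inr <| Or.inr <| Or.inl
        ⟨by rw [trunc_succ_nil, h1], by rw [trunc_succ_nil, h2], ?_, ?_⟩
      · rw [childT_trunc_arrow h1, childT_trunc_arrow h2]
        exact ⟨k, _, _, h3, rfl, rfl⟩
      · rw [childT_trunc_arrow h1, childT_trunc_arrow h2]
        exact ⟨k, _, _, h4, rfl, rfl⟩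
    · refine Or.inr <| Or.inr <| Or.inr <| Or.inl
        ⟨by rw [trunc_succ_nil, h1], by rw [trunc_succ_nil]; exact h2, ?_⟩
      intro ρ hρ
      have hρ' : IsCompPath u ρ := (isCompPath_trunc_iff k u ρ).mp hρ
      rw [subtreeAt_trunc ρ u k hρ'.1]
      exact ⟨k+1, _, _, h3 ρ hρ', rfl, rfl⟩
    · refine Or.inr <| Or.inr <| Or.inr <| Or.inr <| Or.inl
        ⟨by rw [trunc_succ_nil]; exact h1, by rw [trunc_succ_nil, h2], ρ', ?_, ?_⟩
      · exact (isCompPath_trunc_iff k v ρ').mpr hρ'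
      · rw [subtreeAt_trunc ρ' v k hρ'.1]
        exact ⟨k+1, _, _, h3, rfl, rfl⟩
    · refine Or.inr <| Or.inr <| Or.inr <| Or.inr <| Or.inr
        ⟨by rw [trunc_succ_nil, h1], by rw [trunc_succ_nil, h2], ?_⟩
      intro ρ hρ
      have hρx : IsCompPath u ρ := (isCompPath_trunc_iff k u ρ).mp hρ
      obtain ⟨ρ', hρ', h3'⟩ := h3 ρ hρx
      refine ⟨ρ', (isCompPath_trunc_iff k v ρ').mpr hρ', ?_⟩
      rw [subtreeAt_trunc ρ u k hρx.1, subtreeAt_trunc ρ' v k hρ'.1]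
      exact ⟨k+1, _, _, h3', rfl, rfl⟩

lemma subT_trunc_anti {x v : PTree} (k : ℕ) (h : SubT (trunc (k+1) x) (trunc (k+1) v)) :
    SubT (trunc k x) (trunc k v) := by
  have h2 := subT_trunc h k
  rwa [trunc_trunc, trunc_trunc, min_eq_left (Nat.le_succ k)] at h2

lemma pigeon {α : Type*} {F : Set α} (hF : F.Finite) (Q : ℕ → α → Prop)
    (anti : ∀ k v, Q (k+1) v → Q k v) (h : ∀ k, ∃ v ∈ F, Q k v) :
    ∃ v ∈ F, ∀ k, Q k v := by
  classical
  have anti' : ∀ v j k, j ≤ k → Q k v → Q j v := by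
    intro v j k hjk
    induction k with
    | zero => intro hq; exact (Nat.le_zero.mp hjk) ▸ hq
    | succ k ih =>
      intro hq
      rcases Nat.lt_or_ge j (k+1) with hlt | hge
      · exact ih (Nat.lt_succ_iff.mp hlt) (anti k v hq)
      · exact (Nat.le_antisymm hjk hge) ▸ hq
  by_contra hc
  push_neg at hc
  set κ : α → ℕ := fun v => if hv : ∃ k, ¬ Q k v then hv.choose else 0 with hκ
  obtain ⟨N, hN⟩ : ∃ N, ∀ v ∈ F, κ v ≤ N :=
    ⟨hF.toFinset.sup κ, fun v hv => Finset.le_sup (hF.mem_toFinset.mpr hv)⟩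
  obtain ⟨v, hvF, hQ⟩ := h N
  have hex : ∃ k, ¬ Q k v := hc v hvF
  have hnq : ¬ Q (κ v) v := by
    rw [hκ]
    simp only [dif_pos hex]
    exact hex.choose_spec
  exact hnq (anti' v (κ v) N (hN v hvF) hQ)

lemma step_cases {x y : PTree} (k : ℕ) (h : SubT (trunc (k+1) x) (trunc (k+1) y)) :
    (∃ a, x [] = some (.leaf a) ∧ y [] = some (.leaf a))
    ∨ (x [] = some .app ∧ y [] = some .app ∧
        SubT (trunc k (childT x false)) (trunc k (childT y false)) ∧
        SubT (trunc k (childT x true)) (trunc k (childT y true)))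
    ∨ (x [] = some .arrow ∧ y [] = some .arrow ∧
        SubT (trunc k (childT y false)) (trunc k (childT x false)) ∧
        SubT (trunc k (childT x true)) (trunc k (childT y true)))
    ∨ (x [] = some .union ∧ y [] ≠ some .union ∧
        ∀ ρ, IsCompPath x ρ → SubT (trunc (k+1) (subtreeAt x ρ)) (trunc (k+1) y))
    ∨ (x [] ≠ some .union ∧ y [] = some .union ∧
        ∃ ρ', IsCompPath y ρ' ∧ SubT (trunc (k+1) x) (trunc (k+1) (subtreeAt y ρ')))
    ∨ (x [] = some .union ∧ y [] = some .union ∧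
        ∀ ρ, IsCompPath x ρ → ∃ ρ', IsCompPath y ρ' ∧
          SubT (trunc (k+1) (subtreeAt x ρ)) (trunc (k+1) (subtreeAt y ρ'))) := by
  rcases subT_dest h with
    ⟨a,h1,h2⟩ | ⟨h1,h2,h3,h4⟩ | ⟨h1,h2,h3,h4⟩ | ⟨h1,h2,h3⟩ | ⟨h1,h2,ρ',hρ',h3⟩ | ⟨h1,h2,h3⟩
  · rw [trunc_succ_nil] at h1 h2
    exact Or.inl ⟨a, h1, h2⟩
  · rw [trunc_succ_nil] at h1 h2
    rw [childT_trunc_app h1, childT_trunc_app h2] at h3 h4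
    exact Or.inr <| Or.inl ⟨h1, h2, h3, h4⟩
  · rw [trunc_succ_nil] at h1 h2
    rw [childT_trunc_arrow h2, childT_trunc_arrow h1] at h3
    rw [childT_trunc_arrow h1, childT_trunc_arrow h2] at h4
    exact Or.inr <| Or.inr <| Or.inl ⟨h1, h2, h3, h4⟩
  · rw [trunc_succ_nil] at h1 h2
    refine Or.inr <| Or.inr <| Or.inr <| Or.inl ⟨h1, h2, fun ρ hρ => ?_⟩
    have hm : IsCompPath (trunc (k+1) x) ρ := (isCompPath_trunc_iff k x ρ).mpr hρ
    have h3' := h3 ρ hm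
    rwa [subtreeAt_trunc ρ x k hρ.1] at h3'
  · rw [trunc_succ_nil] at h1 h2
    have hρ'' : IsCompPath y ρ' := (isCompPath_trunc_iff k y ρ').mp hρ'
    rw [subtreeAt_trunc ρ' y k hρ''.1] at h3
    exact Or.inr <| Or.inr <| Or.inr <| Or.inr <| Or.inl ⟨h1, h2, ρ', hρ'', h3⟩
  · rw [trunc_succ_nil] at h1 h2
    refine Or.inr <| Or.inr <| Or.inr <| Or.inr <| Or.inr ⟨h1, h2, fun ρ hρ => ?_⟩
    obtain ⟨ρ', hρ', h3'⟩ := h3 ρ ((isCompPath_trunc_iff k x ρ).mpr hρ)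
    have hρ'' := (isCompPath_trunc_iff k y ρ').mp hρ'
    rw [subtreeAt_trunc ρ x k hρ.1, subtreeAt_trunc ρ' y k hρ''.1] at h3'
    exact ⟨ρ', hρ'', h3'⟩

end TruncSubT3

section TruncSubT4

/-- `x` is a (labelled) subtree of `a`. -/
def Reach (a x : PTree) : Prop := ∃ π : List Bool, (a π).isSome ∧ x = subtreeAt a π

lemma reach_self (a : PTree) (h : (a []).isSome) : Reach a a := ⟨[], h, rfl⟩

lemma Reach.root_isSome {a x : PTree} (h : Reach a x) : (x []).isSome := by
  obtain ⟨π, h1, rfl⟩ := h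
  show (a (π ++ [])).isSome
  simpa using h1

lemma reach_subtree {a x : PTree} (h : Reach a x) {ρ : List Bool} (hs : (x ρ).isSome) :
    Reach a (subtreeAt x ρ) := by
  obtain ⟨π, hπ, rfl⟩ := h
  exact ⟨π ++ ρ, hs, (subtreeAt_append a π ρ).symm⟩

lemma reach_child {T : ITree} {x : PTree} (hx : Reach T.label x) {s : TSym}
    (hs : x [] = some s) (hb : s.IsBinary) (i : Bool) : Reach T.label (childT x i) := by
  obtain ⟨π, hπ, rfl⟩ := hx
  have hxl : T.label π = some s := by
    have h0 : subtreeAt T.label π [] = T.label π := by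
      show T.label (π ++ []) = _
      rw [List.append_nil]
    rwa [h0] at hs
  refine ⟨π ++ [i], (T.child_iff π i).mpr ⟨s, hxl, hb⟩, ?_⟩
  rw [subtreeAt_append]
  rfl

lemma comp_subT_left {x y : PTree} (hx0 : x [] = some .union) (hy0 : y [] ≠ some .union)
    (hk : ∀ k, SubT (trunc k x) (trunc k y)) {ρ : List Bool} (hρ : IsCompPath x ρ) (k : ℕ) :
    SubT (trunc k (subtreeAt x ρ)) (trunc k y) := by
  cases k with
  | zero => exact subT_trunc_zero _ _
  | succ k =>
    rcases step_cases k (hk (k+1)) with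
      ⟨c,h1,h2⟩ | ⟨h1,h2,-⟩ | ⟨h1,h2,-⟩ | ⟨h1,h2,h3⟩ | ⟨h1,h2,-⟩ | ⟨h1,h2,-⟩
    · rw [hx0] at h1; simp at h1
    · rw [hx0] at h1; simp at h1
    · rw [hx0] at h1; simp at h1
    · exact h3 ρ hρ
    · exact absurd hx0 h1
    · exact absurd h2 hy0

lemma comp_subT_right {F : Set PTree} (hF : F.Finite) {x y : PTree}
    (hx0 : x [] ≠ some .union) (hy0 : y [] = some .union)
    (hk : ∀ k, SubT (trunc k x) (trunc k y))
    (hmem : ∀ ρ, IsCompPath y ρ → subtreeAt y ρ ∈ F) :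
    ∃ ρ', IsCompPath y ρ' ∧ ∀ k, SubT (trunc k x) (trunc k (subtreeAt y ρ')) := by
  have hp := pigeon hF
    (fun k v => (∃ ρ', IsCompPath y ρ' ∧ v = subtreeAt y ρ') ∧ SubT (trunc k x) (trunc k v))
    (fun k v h => ⟨h.1, subT_trunc_anti k h.2⟩) ?_
  · obtain ⟨v, -, hv⟩ := hp
    obtain ⟨ρ', hρ', hvv⟩ := (hv 0).1
    subst hvv
    exact ⟨ρ', hρ', fun k => (hv k).2⟩
  · intro k
    rcases step_cases k (hk (k+1)) with
      ⟨c,h1,h2⟩ | ⟨h1,h2,-⟩ | ⟨h1,h2,-⟩ | ⟨h1,h2,-⟩ | ⟨h1,h2,ρ',hρ',h3⟩ | ⟨h1,h2,-⟩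
    · rw [hy0] at h2; simp at h2
    · rw [hy0] at h2; simp at h2
    · rw [hy0] at h2; simp at h2
    · exact absurd hy0 h2
    · exact ⟨subtreeAt y ρ', hmem ρ' hρ', ⟨ρ', hρ', rfl⟩, subT_trunc_anti k h3⟩
    · exact absurd h1 hx0

lemma comp_subT_both {F : Set PTree} (hF : F.Finite) {x y : PTree}
    (hx0 : x [] = some .union) (hy0 : y [] = some .union)
    (hk : ∀ k, SubT (trunc k x) (trunc k y))
    (hmem : ∀ ρ, IsCompPath y ρ → subtreeAt y ρ ∈ F)
    {ρ : List Bool} (hρ : IsCompPath x ρ) :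
    ∃ ρ', IsCompPath y ρ' ∧
      ∀ k, SubT (trunc k (subtreeAt x ρ)) (trunc k (subtreeAt y ρ')) := by
  have hp := pigeon hF
    (fun k v => (∃ ρ', IsCompPath y ρ' ∧ v = subtreeAt y ρ') ∧
      SubT (trunc k (subtreeAt x ρ)) (trunc k v))
    (fun k v h => ⟨h.1, subT_trunc_anti k h.2⟩) ?_
  · obtain ⟨v, -, hv⟩ := hp
    obtain ⟨ρ', hρ', hvv⟩ := (hv 0).1
    subst hvv
    exact ⟨ρ', hρ', fun k => (hv k).2⟩
  · intro k
    rcases step_cases k (hk (k+1)) with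
      ⟨c,h1,h2⟩ | ⟨h1,h2,-⟩ | ⟨h1,h2,-⟩ | ⟨h1,h2,-⟩ | ⟨h1,h2,-⟩ | ⟨h1,h2,h3⟩
    · rw [hy0] at h2; simp at h2
    · rw [hy0] at h2; simp at h2
    · rw [hy0] at h2; simp at h2
    · exact absurd hy0 h2
    · exact absurd hx0 h1
    · obtain ⟨ρ', hρ', h3'⟩ := h3 ρ hρ
      exact ⟨subtreeAt y ρ', hmem ρ' hρ', ⟨ρ', hρ', rfl⟩, subT_trunc_anti k h3'⟩

end TruncSubT4

/- STATEMENT 11 -/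

theorem trunc_subT_iff (A B : ITree) :
    (∀ k : ℕ, SubT (trunc k A.label) (trunc k B.label)) ↔ SubT A.label B.label := by
  constructor
  · intro hsub
    have hFA : {u : PTree | Reach A.label u}.Finite := A.regular
    have hFB : {u : PTree | Reach B.label u}.Finite := B.regular
    have hF : {u : PTree | Reach A.label u ∨ Reach B.label u}.Finite := by
      rw [Set.setOf_or]
      exact hFA.union hFB
    refine ⟨fun x y =>
      (Reach A.label x ∨ Reach B.label x) ∧ (Reach A.label y ∨ Reach B.label y) ∧
        ∀ k, SubT (trunc k x) (trunc k y), ?_,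
      Or.inl (reach_self _ A.root_isSome), Or.inr (reach_self _ B.root_isSome), hsub⟩
    rintro x y ⟨hx, hy, hk⟩
    obtain ⟨sx, hx0⟩ := Option.isSome_iff_exists.mp (hx.elim Reach.root_isSome Reach.root_isSome)
    obtain ⟨sy, hy0⟩ := Option.isSome_iff_exists.mp (hy.elim Reach.root_isSome Reach.root_isSome)
    have child_reach : ∀ {z : PTree}, (Reach A.label z ∨ Reach B.label z) →
        ∀ {s : TSym}, z [] = some s → s.IsBinary → ∀ i : Bool,
        Reach A.label (childT z i) ∨ Reach B.label (childT z i) := by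
      rintro z (hz | hz) s hzs hb i
      · exact Or.inl (reach_child hz hzs hb i)
      · exact Or.inr (reach_child hz hzs hb i)
    have sub_reach : ∀ {z : PTree}, (Reach A.label z ∨ Reach B.label z) →
        ∀ {ρ : List Bool}, (z ρ).isSome →
        Reach A.label (subtreeAt z ρ) ∨ Reach B.label (subtreeAt z ρ) := by
      intro z hz ρ hs
      exact hz.imp (fun h => reach_subtree h hs) (fun h => reach_subtree h hs)
    by_cases hxu : x [] = some TSym.union
    · by_cases hyu : y [] = some TSym.union
      · -- both unions
        refine Or.inr <| Or.inr <| Or.inr <| Or.inr <| Or.inr ⟨hxu, hyu, fun ρ hρ => ?_⟩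
        obtain ⟨ρ', hρ', hall⟩ := comp_subT_both hF hxu hyu hk
          (fun σ hσ => sub_reach hy hσ.2.1) hρ
        exact ⟨ρ', hρ', sub_reach hx hρ.2.1, sub_reach hy hρ'.2.1, hall⟩
      · -- x union, y not
        refine Or.inr <| Or.inr <| Or.inr <| Or.inl ⟨hxu, hyu, fun ρ hρ => ?_⟩
        exact ⟨sub_reach hx hρ.2.1, hy, fun k => comp_subT_left hxu hyu hk hρ k⟩
    · by_cases hyu : y [] = some TSym.union
      · -- y union, x not
        obtain ⟨ρ', hρ', hall⟩ := comp_subT_right hF hxu hyu hk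
          (fun σ hσ => sub_reach hy hσ.2.1)
        exact Or.inr <| Or.inr <| Or.inr <| Or.inr <| Or.inl
          ⟨hxu, hyu, ρ', hρ', hx, sub_reach hy hρ'.2.1, hall⟩
      · -- neither a union
        cases sx with
        | leaf a =>
          cases sy with
          | leaf b =>
            rcases step_cases 0 (hk (0+1)) with
              ⟨c,e1,e2⟩ | ⟨e1,e2,-⟩ | ⟨e1,e2,-⟩ | ⟨e1,e2,-⟩ | ⟨e1,e2,-⟩ | ⟨e1,e2,-⟩
            · exact Or.inl ⟨c, e1, e2⟩
            · rw [hx0] at e1; simp at e1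
            · rw [hx0] at e1; simp at e1
            · rw [hx0] at e1; simp at e1
            · rw [hy0] at e2; simp at e2
            · rw [hx0] at e1; simp at e1
          | app =>
            exfalso
            rcases step_cases 0 (hk (0+1)) with
              ⟨c,e1,e2⟩ | ⟨e1,e2,-⟩ | ⟨e1,e2,-⟩ | ⟨e1,e2,-⟩ | ⟨e1,e2,-⟩ | ⟨e1,e2,-⟩ <;>
              rw [hx0] at e1 <;> rw [hy0] at e2 <;> simp_all
          | arrow =>
            exfalso
            rcases step_cases 0 (hk (0+1)) with
              ⟨c,e1,e2⟩ | ⟨e1,e2,-⟩ | ⟨e1,e2,-⟩ | ⟨e1,e2,-⟩ | ⟨e1,e2,-⟩ | ⟨e1,e2,-⟩ <;>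
              rw [hx0] at e1 <;> rw [hy0] at e2 <;> simp_all
          | union => exact absurd hy0 hyu
        | app =>
          cases sy with
          | leaf b =>
            exfalso
            rcases step_cases 0 (hk (0+1)) with
              ⟨c,e1,e2⟩ | ⟨e1,e2,-⟩ | ⟨e1,e2,-⟩ | ⟨e1,e2,-⟩ | ⟨e1,e2,-⟩ | ⟨e1,e2,-⟩ <;>
              rw [hx0] at e1 <;> rw [hy0] at e2 <;> simp_all
          | app =>
            have hc : ∀ (i : Bool) (k : ℕ),
                SubT (trunc k (childT x i)) (trunc k (childT y i)) := by
              intro i k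
              cases k with
              | zero => exact subT_trunc_zero _ _
              | succ k =>
                rcases step_cases (k+1) (hk (k+1+1)) with
                  ⟨c,e1,e2⟩ | ⟨e1,e2,e3,e4⟩ | ⟨e1,e2,-⟩ | ⟨e1,e2,-⟩ | ⟨e1,e2,-⟩ | ⟨e1,e2,-⟩
                · rw [hx0] at e1; simp at e1
                · cases i
                  · exact e3
                  · exact e4
                · rw [hx0] at e1; simp at e1
                · rw [hx0] at e1; simp at e1
                · rw [hy0] at e2; simp at e2
                · rw [hx0] at e1; simp at e1
            refine Or.inr <| Or.inl ⟨hx0, hy0, ?_, ?_⟩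
            · exact ⟨child_reach hx hx0 trivial false, child_reach hy hy0 trivial false,
                hc false⟩
            · exact ⟨child_reach hx hx0 trivial true, child_reach hy hy0 trivial true,
                hc true⟩
          | arrow =>
            exfalso
            rcases step_cases 0 (hk (0+1)) with
              ⟨c,e1,e2⟩ | ⟨e1,e2,-⟩ | ⟨e1,e2,-⟩ | ⟨e1,e2,-⟩ | ⟨e1,e2,-⟩ | ⟨e1,e2,-⟩ <;>
              rw [hx0] at e1 <;> rw [hy0] at e2 <;> simp_all
          | union => exact absurd hy0 hyu
        | arrow =>
          cases sy with
          | leaf b =>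
            exfalso
            rcases step_cases 0 (hk (0+1)) with
              ⟨c,e1,e2⟩ | ⟨e1,e2,-⟩ | ⟨e1,e2,-⟩ | ⟨e1,e2,-⟩ | ⟨e1,e2,-⟩ | ⟨e1,e2,-⟩ <;>
              rw [hx0] at e1 <;> rw [hy0] at e2 <;> simp_all
          | app =>
            exfalso
            rcases step_cases 0 (hk (0+1)) with
              ⟨c,e1,e2⟩ | ⟨e1,e2,-⟩ | ⟨e1,e2,-⟩ | ⟨e1,e2,-⟩ | ⟨e1,e2,-⟩ | ⟨e1,e2,-⟩ <;>
              rw [hx0] at e1 <;> rw [hy0] at e2 <;> simp_all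
          | arrow =>
            have hcn : ∀ k : ℕ, SubT (trunc k (childT y false)) (trunc k (childT x false)) := by
              intro k
              cases k with
              | zero => exact subT_trunc_zero _ _
              | succ k =>
                rcases step_cases (k+1) (hk (k+1+1)) with
                  ⟨c,e1,e2⟩ | ⟨e1,e2,-⟩ | ⟨e1,e2,e3,e4⟩ | ⟨e1,e2,-⟩ | ⟨e1,e2,-⟩ | ⟨e1,e2,-⟩
                · rw [hx0] at e1; simp at e1
                · rw [hx0] at e1; simp at e1
                · exact e3
                · rw [hx0] at e1; simp at e1
                · rw [hy0] at e2; simp at e2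
                · rw [hx0] at e1; simp at e1
            have hcp : ∀ k : ℕ, SubT (trunc k (childT x true)) (trunc k (childT y true)) := by
              intro k
              cases k with
              | zero => exact subT_trunc_zero _ _
              | succ k =>
                rcases step_cases (k+1) (hk (k+1+1)) with
                  ⟨c,e1,e2⟩ | ⟨e1,e2,-⟩ | ⟨e1,e2,e3,e4⟩ | ⟨e1,e2,-⟩ | ⟨e1,e2,-⟩ | ⟨e1,e2,-⟩
                · rw [hx0] at e1; simp at e1
                · rw [hx0] at e1; simp at e1
                · exact e4
                · rw [hx0] at e1; simp at e1
                · rw [hy0] at e2; simp at e2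
                · rw [hx0] at e1; simp at e1
            refine Or.inr <| Or.inr <| Or.inl ⟨hx0, hy0, ?_, ?_⟩
            · exact ⟨child_reach hy hy0 trivial false, child_reach hx hx0 trivial false, hcn⟩
            · exact ⟨child_reach hx hx0 trivial true, child_reach hy hy0 trivial true, hcp⟩
          | union => exact absurd hy0 hyu
        | union => exact absurd hx0 hxu
  · intro h k
    exact subT_trunc h k


end CAPPaper
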